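/- Reweighted total variation bound: if π = Σᵢ wᵢπᵢ with wᵢ > 0, each πᵢ satisfies a Poincaré inequality Var_{πᵢ}(g) ≤ C·Eᵢ(g,g), the Dirichlet form comparison Σᵢ wᵢEᵢ(f,f) ≤ E(f,f) holds, and each πᵢ satisfies ‖ν − πᵢ‖²_TV ≤ 4C·FI(ν‖πᵢ), then for every probability measure μ, inf_{π̃ ∈ C} ‖μ − π̃‖²_TV ≤ 4C·FI(μ‖π). -/

import Mathlib

open MeasureTheory ProbabilityTheory ENNReal Classical

set_option maxHeartbeats 1000000

private lemma hrpow_sq (x : ℝ≥0∞) : (x ^ (1/2:ℝ)) ^ 2 = x := by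
  rw [← ENNReal.rpow_two, ← ENNReal.rpow_mul]; norm_num

private lemma hsq_rpow (x : ℝ≥0∞) : (x ^ 2) ^ (1/2:ℝ) = x := by
  rw [← ENNReal.rpow_two, ← ENNReal.rpow_mul]; norm_num

private lemma ennreal_cs_fin {m : ℕ} (f g : Fin m → ℝ≥0∞) :
    (∑ i, f i * g i) ≤ (∑ i, f i ^ 2) ^ (1/2 : ℝ) * (∑ i, g i ^ 2) ^ (1/2 : ℝ) := by
  have h := ENNReal.lintegral_mul_le_Lp_mul_Lq (Measure.count : Measure (Fin m))
    (by constructor <;> norm_num : (2:ℝ).HolderConjugate 2)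
    (f := f) (g := g) (measurable_of_countable f).aemeasurable
    (measurable_of_countable g).aemeasurable
  simpa [lintegral_count, tsum_fintype, ENNReal.rpow_two] using h

private lemma lint_cs {X : Type*} [MeasurableSpace X] (μ : Measure X) {f g : X → ℝ≥0∞}
    (hf : AEMeasurable f μ) (hg : AEMeasurable g μ) :
    ∫⁻ x, f x * g x ∂μ ≤ (∫⁻ x, f x ^ 2 ∂μ) ^ (1/2 : ℝ) * (∫⁻ x, g x ^ 2 ∂μ) ^ (1/2 : ℝ) := by
  have h := ENNReal.lintegral_mul_le_Lp_mul_Lq μ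
    (by constructor <;> norm_num : (2:ℝ).HolderConjugate 2) hf hg
  simpa [ENNReal.rpow_two] using h

private lemma diff_sq (a b : ℝ≥0∞) (h : b ≤ a) (hb : b ≠ ∞) :
    (a - b) * (a + b) = a * a - b * b := by
  refine ENNReal.eq_sub_of_add_eq (ENNReal.mul_ne_top hb hb) ?_
  calc (a-b)*(a+b) + b*b = (a-b)*a + ((a-b)*b + b*b) := by rw [mul_add, add_assoc]
    _ = (a-b)*a + ((a-b)+b)*b := by rw [add_mul]
    _ = (a-b)*a + b*a := by rw [tsub_add_cancel_of_le h, mul_comm a b]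
    _ = ((a-b)+b)*a := by rw [add_mul]
    _ = a*a := by rw [tsub_add_cancel_of_le h]

private lemma sum_tsub_le {ι : Type*} (s : Finset ι) (a b : ι → ℝ≥0∞) :
    (∑ i ∈ s, a i) - (∑ i ∈ s, b i) ≤ ∑ i ∈ s, (a i - b i) := by
  rw [tsub_le_iff_right, ← Finset.sum_add_distrib]
  exact Finset.sum_le_sum fun i _ => le_tsub_add

private lemma mul_tsub_le (c a b : ℝ≥0∞) : c * a - c * b ≤ c * (a - b) := by
  rw [tsub_le_iff_right, ← mul_add]
  exact mul_le_mul_right le_tsub_add c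
open MeasureTheory ProbabilityTheory ENNReal Classical

private lemma comp_bound {X : Type*} [MeasurableSpace X] (p : Measure X)
    [IsProbabilityMeasure p] {h : X → ℝ≥0∞} (hm : Measurable h)
    (hfin : ∀ᵐ x ∂p, h x ≠ ∞) (hZfin : ∫⁻ y, h y ∂p ≠ ∞) :
    ∫⁻ x, ((h x - ∫⁻ y, h y ∂p) + ((∫⁻ y, h y ∂p) - h x)) ∂p
      ≤ (4 * ((∫⁻ y, h y ∂p) *
          evariance (fun x => Real.sqrt (h x).toReal) p)) ^ (1/2:ℝ) := by
  set Z := ∫⁻ y, h y ∂p with hZdef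
  set f : X → ℝ := fun x => Real.sqrt (h x).toReal with hfdef
  have hfm : Measurable f := Real.continuous_sqrt.measurable.comp hm.ennreal_toReal
  have hfnn : ∀ x, 0 ≤ f x := fun x => Real.sqrt_nonneg _
  have hae : ∀ᵐ x ∂p, ENNReal.ofReal (f x ^ 2) = h x := by
    filter_upwards [hfin] with x hx
    rw [hfdef]
    simp only
    rw [Real.sq_sqrt ENNReal.toReal_nonneg, ENNReal.ofReal_toReal hx]
  have hZf : ∫⁻ x, ENNReal.ofReal (f x ^ 2) ∂p = Z := by
    rw [hZdef]; exact lintegral_congr_ae hae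
  set s : ℝ := Real.sqrt Z.toReal with hsdef
  have hsnn : 0 ≤ s := Real.sqrt_nonneg _
  set S : ℝ≥0∞ := ENNReal.ofReal s with hSdef
  have hSfin : S ≠ ∞ := ENNReal.ofReal_ne_top
  have hS2 : S * S = Z := by
    rw [hSdef, ← ENNReal.ofReal_mul hsnn, hsdef, Real.mul_self_sqrt ENNReal.toReal_nonneg,
      ENNReal.ofReal_toReal hZfin]
  have hs2 : ENNReal.ofReal (s ^ 2) = Z := by
    rw [sq, ENNReal.ofReal_mul hsnn, ← hSdef, hS2]
  set M : ℝ≥0∞ := ∫⁻ x, ENNReal.ofReal (f x) ∂p with hMdef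
  have hMmeas : Measurable fun x => ENNReal.ofReal (f x) := hfm.ennreal_ofReal
  have hMS : M ≤ S := by
    calc M = ∫⁻ x, ENNReal.ofReal (f x) * 1 ∂p := by simp only [mul_one, hMdef]
      _ ≤ (∫⁻ x, ENNReal.ofReal (f x) ^ 2 ∂p) ^ (1/2:ℝ) * (∫⁻ _, (1:ℝ≥0∞) ^ 2 ∂p) ^ (1/2:ℝ) :=
          lint_cs p hMmeas.aemeasurable aemeasurable_const
      _ = Z ^ (1/2:ℝ) := by
          simp only [one_pow, lintegral_one, measure_univ, ENNReal.one_rpow, mul_one]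
          congr 1
          rw [← hZf]
          refine lintegral_congr fun x => ?_
          rw [← ENNReal.ofReal_pow (hfnn x)]
      _ = S := by rw [← hS2, ← sq, hsq_rpow]
  have hMfin : M ≠ ∞ := fun hM => hSfin (top_le_iff.mp (hM ▸ hMS))
  have hmean : ∫ x, f x ∂p = M.toReal := by
    rw [integral_eq_lintegral_of_nonneg_ae (Filter.Eventually.of_forall hfnn)
      hfm.aestronglyMeasurable, hMdef]
  have hmnn : 0 ≤ ∫ x, f x ∂p := hmean ▸ ENNReal.toReal_nonneg
  have hMval : ENNReal.ofReal (∫ x, f x ∂p) = M := by rw [hmean, ENNReal.ofReal_toReal hMfin]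
  set V := evariance f p with hVdef
  set mR : ℝ := ∫ x, f x ∂p with hmRdef
  have hVlint : V = ∫⁻ x, ENNReal.ofReal ((f x - mR) ^ 2) ∂p := by
    rw [hVdef, evariance_eq_lintegral_ofReal]
  -- variance identity : Z = V + M^2
  have hvarid : Z + M ^ 2 = V + 2 * M * M := by
    have hpt : ∀ x, ENNReal.ofReal (f x ^ 2) + ENNReal.ofReal (mR ^ 2)
        = ENNReal.ofReal ((f x - mR) ^ 2) + ENNReal.ofReal (2 * mR * f x) := by
      intro x
      rw [← ENNReal.ofReal_add (sq_nonneg _) (sq_nonneg _),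
        ← ENNReal.ofReal_add (sq_nonneg _) (by positivity)]
      congr 1; ring
    have hint := lintegral_congr (μ := p) hpt
    rw [lintegral_add_right _ measurable_const, lintegral_add_left
      (f := fun x => ENNReal.ofReal ((f x - mR) ^ 2)) ((hfm.sub measurable_const).pow measurable_const).ennreal_ofReal] at hint
    have hl : ∫⁻ _, ENNReal.ofReal (mR ^ 2) ∂p = M ^ 2 := by
      rw [lintegral_const, measure_univ, mul_one, ENNReal.ofReal_pow hmnn, hMval]
    have hr : ∫⁻ x, ENNReal.ofReal (2 * mR * f x) ∂p = 2 * M * M := by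
      have : ∀ x, ENNReal.ofReal (2 * mR * f x)
          = ENNReal.ofReal (2 * mR) * ENNReal.ofReal (f x) := fun x =>
        ENNReal.ofReal_mul (by positivity)
      rw [lintegral_congr this, lintegral_const_mul _ hMmeas, ENNReal.ofReal_mul (by norm_num),
        hMval]
      norm_num
      rfl
    rw [hZf, hl, hr, ← hVlint] at hint
    exact hint
  have hV : Z - M ^ 2 = V := by
    have hZeq : Z = V + M ^ 2 := by
      have h2 : Z + M ^ 2 = (V + M ^ 2) + M ^ 2 := by rw [hvarid]; ring
      exact (ENNReal.add_left_inj (ENNReal.pow_ne_top hMfin)).mp h2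
    rw [hZeq, ENNReal.add_sub_cancel_right (ENNReal.pow_ne_top hMfin)]
  have hVfin : V ≠ ∞ := by
    intro ht
    have hle : V ≤ Z := hV ▸ tsub_le_self
    rw [ht] at hle
    exact hZfin (top_le_iff.mp hle)
  -- A and B
  set A := ∫⁻ x, ENNReal.ofReal ((f x - s) ^ 2) ∂p with hAdef
  set B := ∫⁻ x, ENNReal.ofReal ((f x + s) ^ 2) ∂p with hBdef
  have hSM : S * M ≤ Z := by
    calc S * M ≤ S * S := mul_le_mul_right hMS S
      _ = Z := hS2
  have hSMfin : S * M ≠ ∞ := ENNReal.mul_ne_top hSfin hMfin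
  have hA : A = 2 * Z - 2 * (S * M) := by
    have hpt : ∀ x, ENNReal.ofReal ((f x - s) ^ 2) + ENNReal.ofReal (2 * s * f x)
        = ENNReal.ofReal (f x ^ 2) + ENNReal.ofReal (s ^ 2) := by
      intro x
      rw [← ENNReal.ofReal_add (sq_nonneg _) (by positivity),
        ← ENNReal.ofReal_add (sq_nonneg _) (sq_nonneg _)]
      congr 1; ring
    have hint := lintegral_congr (μ := p) hpt
    rw [lintegral_add_right _ measurable_const,
      lintegral_add_left (f := fun x => ENNReal.ofReal ((f x - s) ^ 2))
        ((hfm.sub measurable_const).pow measurable_const).ennreal_ofReal] at hint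
    have h2s : ∫⁻ x, ENNReal.ofReal (2 * s * f x) ∂p = 2 * (S * M) := by
      have hp2 : ∀ x, ENNReal.ofReal (2 * s * f x)
          = ENNReal.ofReal (2 * s) * ENNReal.ofReal (f x) := fun x =>
        ENNReal.ofReal_mul (by positivity)
      rw [lintegral_congr hp2, lintegral_const_mul _ hMmeas, ENNReal.ofReal_mul (by norm_num)]
      rw [hSdef, hMdef]
      norm_num
      ring
    have hcs : ∫⁻ _, ENNReal.ofReal (s ^ 2) ∂p = Z := by
      rw [lintegral_const, measure_univ, mul_one, hs2]
    rw [hZf, h2s, hcs] at hint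
    have h2Z : A + 2 * (S * M) = 2 * Z := by rw [hint]; ring
    exact ENNReal.eq_sub_of_add_eq (ENNReal.mul_ne_top (by norm_num) hSMfin) h2Z
  have hB : B = 2 * Z + 2 * (S * M) := by
    have hpt : ∀ x, ENNReal.ofReal ((f x + s) ^ 2)
        = ENNReal.ofReal (f x ^ 2) + (ENNReal.ofReal (2 * s * f x) + ENNReal.ofReal (s ^ 2)) := by
      intro x
      rw [← ENNReal.ofReal_add (by positivity) (sq_nonneg _),
        ← ENNReal.ofReal_add (sq_nonneg _) (by positivity)]
      congr 1; ring
    have hint := lintegral_congr (μ := p) hpt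
    rw [lintegral_add_left (hfm.pow measurable_const).ennreal_ofReal,
      lintegral_add_right _ measurable_const] at hint
    have h2s : ∫⁻ x, ENNReal.ofReal (2 * s * f x) ∂p = 2 * (S * M) := by
      have hp2 : ∀ x, ENNReal.ofReal (2 * s * f x)
          = ENNReal.ofReal (2 * s) * ENNReal.ofReal (f x) := fun x =>
        ENNReal.ofReal_mul (by positivity)
      rw [lintegral_congr hp2, lintegral_const_mul _ hMmeas, ENNReal.ofReal_mul (by norm_num)]
      rw [hSdef, hMdef]
      norm_num
      ring
    have hcs : ∫⁻ _, ENNReal.ofReal (s ^ 2) ∂p = Z := by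
      rw [lintegral_const, measure_univ, mul_one, hs2]
    rw [hZf, h2s, hcs] at hint
    rw [hBdef.trans hint]; ring
  -- product bound
  have hABle : A * B ≤ 4 * (Z * V) := by
    have h2SM : 2 * (S * M) ≤ 2 * Z := mul_le_mul_right hSM 2
    have hdiff := diff_sq (2 * Z) (2 * (S * M)) h2SM
      (ENNReal.mul_ne_top (by norm_num) hSMfin)
    calc A * B = (2 * Z - 2 * (S * M)) * (2 * Z + 2 * (S * M)) := by rw [hA, hB]
      _ = (2 * Z) * (2 * Z) - (2 * (S * M)) * (2 * (S * M)) := hdiff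
      _ = (4 * Z) * Z - (4 * Z) * (M ^ 2) := by
          congr 1
          · ring
          · calc (2 * (S * M)) * (2 * (S * M)) = 4 * ((S * S) * (M * M)) := by ring
              _ = (4 * Z) * (M ^ 2) := by rw [hS2]; ring
      _ ≤ (4 * Z) * (Z - M ^ 2) := mul_tsub_le _ _ _
      _ = 4 * (Z * V) := by rw [hV, mul_assoc]
  -- pointwise identity for the TV integrand
  have hptae : ∀ᵐ x ∂p, (h x - Z) + (Z - h x)
      = ENNReal.ofReal |f x - s| * ENNReal.ofReal (f x + s) := by
    filter_upwards [hae] with x hx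
    rw [← hx, ← hs2, ← ENNReal.ofReal_mul (abs_nonneg _)]
    have habs : |f x - s| * (f x + s) = |f x ^ 2 - s ^ 2| := by
      rw [← abs_of_nonneg (a := f x + s) (by positivity), ← abs_mul]
      congr 1; ring
    rw [habs]
    rcases le_total (f x) s with hle | hle
    · have h1 : ENNReal.ofReal (f x ^ 2) ≤ ENNReal.ofReal (s ^ 2) :=
        ENNReal.ofReal_le_ofReal (by nlinarith [hfnn x])
      rw [tsub_eq_zero_of_le h1, zero_add, ← ENNReal.ofReal_sub _ (sq_nonneg _),
        abs_of_nonpos (by nlinarith [hfnn x])]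
      ring_nf
    · have h1 : ENNReal.ofReal (s ^ 2) ≤ ENNReal.ofReal (f x ^ 2) :=
        ENNReal.ofReal_le_ofReal (by nlinarith [hfnn x])
      rw [tsub_eq_zero_of_le h1, add_zero, ← ENNReal.ofReal_sub _ (sq_nonneg _),
        abs_of_nonneg (by nlinarith [hfnn x])]
  -- conclude
  calc ∫⁻ x, ((h x - Z) + (Z - h x)) ∂p
      = ∫⁻ x, ENNReal.ofReal |f x - s| * ENNReal.ofReal (f x + s) ∂p :=
        lintegral_congr_ae hptae
    _ ≤ (∫⁻ x, ENNReal.ofReal |f x - s| ^ 2 ∂p) ^ (1/2:ℝ)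
        * (∫⁻ x, ENNReal.ofReal (f x + s) ^ 2 ∂p) ^ (1/2:ℝ) :=
        lint_cs p ((hfm.sub measurable_const).abs.ennreal_ofReal).aemeasurable
          ((hfm.add measurable_const).ennreal_ofReal).aemeasurable
    _ = A ^ (1/2:ℝ) * B ^ (1/2:ℝ) := by
        congr 1
        · congr 1
          refine lintegral_congr fun x => ?_
          rw [← ENNReal.ofReal_pow (abs_nonneg _), sq_abs]
        · congr 1
          refine lintegral_congr fun x => ?_
          rw [← ENNReal.ofReal_pow (by positivity)]
    _ = (A * B) ^ (1/2:ℝ) := (ENNReal.mul_rpow_of_nonneg A B (by norm_num)).symm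
    _ ≤ (4 * (Z * V)) ^ (1/2:ℝ) := ENNReal.rpow_le_rpow hABle (by norm_num)

/-- Total variation distance (total variation norm of the difference): for probability
measures, `‖μ − ν‖_TV = sup over measurable s of (μ(s) − ν(s)) + (ν(sᶜ) − μ(sᶜ))`. -/
noncomputable def tvDist {X : Type*} [MeasurableSpace X] (μ ν : Measure X) : ℝ≥0∞ :=
  ⨆ (s : Set X) (_ : MeasurableSet s), (μ s - ν s) + (ν sᶜ - μ sᶜ)

/-- Relative Fisher information associated with a Dirichlet form, given by the quadratic
functional `E(f) = E(f, f)` with domain `Dom`. -/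
noncomputable def fisherInfo {X : Type*} [MeasurableSpace X]
    (Dom : Set (X → ℝ)) (E : (X → ℝ) → ℝ≥0∞) (μ π : Measure X) : ℝ≥0∞ :=
  if μ ≪ π ∧ (fun x => Real.sqrt (μ.rnDeriv π x).toReal) ∈ Dom
  then E (fun x => Real.sqrt (μ.rnDeriv π x).toReal) else ∞

/-- The set of reweighted mixtures `C = {∑ i, λᵢ πᵢ : λ ∈ Δₘ}`. -/
def mixSet {X : Type*} [MeasurableSpace X] {m : ℕ} (π : Fin m → Measure X) :
    Set (Measure X) :=
  {ν | ∃ l : Fin m → ℝ≥0∞, (∑ i, l i) = 1 ∧ ν = ∑ i, l i • π i}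

/-- Reweighted total variation bound: if `π = ∑ i, wᵢ πᵢ` with positive
weights, each `πᵢ` satisfies a Poincaré inequality `Var_{πᵢ}(g) ≤ C · Eᵢ(g, g)`, the
Dirichlet form comparison `∑ i, wᵢ Eᵢ(f, f) ≤ E(f, f)` holds, and each `πᵢ` satisfies
`‖ν − πᵢ‖²_TV ≤ 4C · FI(ν‖πᵢ)`, then for every probability measure `μ`,
`inf_{π̃ ∈ C} ‖μ − π̃‖²_TV ≤ 4C · FI(μ‖π)`. -/
theorem reweighted_tv_bound
    {X : Type*} [MeasurableSpace X] [TopologicalSpace X] [PolishSpace X] [BorelSpace X]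
    {m : ℕ} (w : Fin m → ℝ≥0∞) (π : Fin m → Measure X) (πmix : Measure X)
    [∀ i, IsProbabilityMeasure (π i)]
    (hw_pos : ∀ i, 0 < w i) (hw_sum : ∑ i, w i = 1)
    (hmix : πmix = ∑ i, w i • π i)
    (Dom : Set (X → ℝ)) (E : (X → ℝ) → ℝ≥0∞)
    (Domi : Fin m → Set (X → ℝ)) (Ei : Fin m → (X → ℝ) → ℝ≥0∞)
    (hdom : ∀ f ∈ Dom, ∀ i, f ∈ Domi i)
    (hcomp : ∀ f ∈ Dom, ∑ i, w i * Ei i f ≤ E f)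
    (C : ℝ≥0∞)
    -- Poincaré inequality for each component
    (hPoincare : ∀ i, ∀ g ∈ Domi i, evariance g (π i) ≤ C * Ei i g)
    -- transport-information (TV) inequality for each component
    (hTVI : ∀ i, ∀ ν : Measure X, IsProbabilityMeasure ν →
      tvDist ν (π i) ^ 2 ≤ 4 * C * fisherInfo (Domi i) (Ei i) ν (π i))
    (μ : Measure X) [IsProbabilityMeasure μ] :
    (⨅ ν ∈ mixSet π, tvDist μ ν ^ 2) ≤ 4 * C * fisherInfo Dom E μ πmix := by
  classical
  have hm0 : 0 < m := by
    rcases Nat.eq_zero_or_pos m with h0 | h0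
    · subst h0; simp at hw_sum
    · exact h0
  by_cases hC : C = 0
  · set i0 : Fin m := ⟨0, hm0⟩
    have hmem : π i0 ∈ mixSet π := by
      refine ⟨fun j => if j = i0 then 1 else 0, by simp, ?_⟩
      have : ∀ j ∈ Finset.univ, (if j = i0 then (1:ℝ≥0∞) else 0) • π j
          = (if j = i0 then π j else 0) := by
        intro j _
        split <;> simp
      rw [Finset.sum_congr rfl this, Finset.sum_ite_eq' Finset.univ i0 π]
      simp
    have h0 := hTVI i0 μ inferInstance
    rw [hC] at h0
    simp only [mul_zero, zero_mul, le_zero_iff] at h0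
    refine le_trans (iInf₂_le (π i0) hmem) ?_
    rw [h0]
    exact zero_le
  by_cases hcond : μ ≪ πmix ∧ (fun x => Real.sqrt (μ.rnDeriv πmix x).toReal) ∈ Dom
  swap
  · rw [fisherInfo, if_neg hcond, ENNReal.mul_top (by simp [hC])]
    exact le_top
  have hFI : fisherInfo Dom E μ πmix = E (fun x => Real.sqrt (μ.rnDeriv πmix x).toReal) := by
    rw [fisherInfo, if_pos hcond]
  rw [hFI]
  obtain ⟨hac, hDom⟩ := hcond
  -- πmix is a probability measure
  haveI hπmixP : IsProbabilityMeasure πmix := by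
    constructor
    rw [hmix, Measure.finset_sum_apply]
    simp only [Measure.smul_apply, smul_eq_mul, measure_univ, mul_one]
    exact hw_sum
  set h : X → ℝ≥0∞ := μ.rnDeriv πmix with hhdef
  have hhm : Measurable h := Measure.measurable_rnDeriv μ πmix
  set f : X → ℝ := fun x => Real.sqrt (h x).toReal with hfdef
  have hfDom : f ∈ Dom := hDom
  have hacI : ∀ i, π i ≪ πmix := by
    intro i t ht
    rw [hmix, Measure.finset_sum_apply] at ht
    have h2 := (Finset.sum_eq_zero_iff.mp ht) i (Finset.mem_univ i)
    rw [Measure.smul_apply, smul_eq_mul] at h2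
    rcases mul_eq_zero.mp h2 with h3 | h3
    · exact absurd h3 (hw_pos i).ne'
    · exact h3
  have hfin : ∀ i, ∀ᵐ x ∂(π i), h x ≠ ∞ := fun i =>
    (hacI i).ae_le (Measure.rnDeriv_ne_top μ πmix)
  set Z : Fin m → ℝ≥0∞ := fun i => ∫⁻ y, h y ∂(π i) with hZdef
  have hZsum : ∑ i, w i * Z i = 1 := by
    have h1 : ∫⁻ y, h y ∂πmix = 1 := by
      rw [hhdef, Measure.lintegral_rnDeriv hac, measure_univ]
    rw [← h1]
    conv_rhs => rw [hmix, lintegral_finset_sum_measure]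
    exact Finset.sum_congr rfl fun i _ => by rw [lintegral_smul_measure, smul_eq_mul]
  have hZfin : ∀ i, Z i ≠ ∞ := by
    intro i hZi
    have hle : w i * Z i ≤ 1 := by
      rw [← hZsum]
      exact Finset.single_le_sum (f := fun j => w j * Z j) (fun j _ => zero_le)
        (Finset.mem_univ i)
    rw [hZi, ENNReal.mul_top (hw_pos i).ne'] at hle
    simp at hle
  set V : Fin m → ℝ≥0∞ := fun i => evariance f (π i) with hVdef
  have hVle : ∀ i, V i ≤ C * Ei i f := fun i => hPoincare i f (hdom f hfDom i)
  set D : Fin m → ℝ≥0∞ := fun i => ∫⁻ x, ((h x - Z i) + (Z i - h x)) ∂(π i) with hDdef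
  have hDle : ∀ i, D i ≤ (4 * (Z i * V i)) ^ (1/2:ℝ) := fun i =>
    comp_bound (π i) hhm (hfin i) (hZfin i)
  set ν0 : Measure X := ∑ i, (w i * Z i) • π i with hν0def
  have hν0mem : ν0 ∈ mixSet π := ⟨fun i => w i * Z i, hZsum, rfl⟩
  -- total variation bound
  have htv : tvDist μ ν0 ≤ ∑ i, w i * D i := by
    refine iSup_le fun s => iSup_le fun hs => ?_
    have hμt : ∀ t : Set X, MeasurableSet t →
        μ t = ∑ i, w i * ∫⁻ x in t, h x ∂(π i) := by
      intro t ht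
      rw [← Measure.setLIntegral_rnDeriv hac t, ← hhdef, ← lintegral_indicator ht]
      conv_lhs => rw [hmix, lintegral_finset_sum_measure]
      refine Finset.sum_congr rfl fun i _ => ?_
      rw [lintegral_smul_measure, smul_eq_mul, lintegral_indicator ht]
    have hνt : ∀ t : Set X, ν0 t = ∑ i, (w i * Z i) * π i t := by
      intro t
      rw [hν0def, Measure.finset_sum_apply]
      exact Finset.sum_congr rfl fun i _ => by rw [Measure.smul_apply, smul_eq_mul]
    have key : ∀ t : Set X, MeasurableSet t →
        μ t - ν0 t ≤ ∑ i, w i * ∫⁻ x in t, (h x - Z i) ∂(π i) := by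
      intro t ht
      rw [hμt t ht, hνt t]
      refine le_trans (sum_tsub_le _ _ _) (Finset.sum_le_sum fun i _ => ?_)
      calc w i * (∫⁻ x in t, h x ∂(π i)) - (w i * Z i) * π i t
          = w i * (∫⁻ x in t, h x ∂(π i)) - w i * (Z i * π i t) := by rw [mul_assoc]
        _ ≤ w i * ((∫⁻ x in t, h x ∂(π i)) - Z i * π i t) := mul_tsub_le _ _ _
        _ ≤ w i * ∫⁻ x in t, (h x - Z i) ∂(π i) := by
            refine mul_le_mul_right ?_ (w i)
            rw [← setLIntegral_const t (Z i)]
            exact lintegral_sub_le _ _ measurable_const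
    have key' : ∀ t : Set X, MeasurableSet t →
        ν0 t - μ t ≤ ∑ i, w i * ∫⁻ x in t, (Z i - h x) ∂(π i) := by
      intro t ht
      rw [hμt t ht, hνt t]
      refine le_trans (sum_tsub_le _ _ _) (Finset.sum_le_sum fun i _ => ?_)
      calc (w i * Z i) * π i t - w i * (∫⁻ x in t, h x ∂(π i))
          = w i * (Z i * π i t) - w i * (∫⁻ x in t, h x ∂(π i)) := by rw [mul_assoc]
        _ ≤ w i * ((Z i * π i t) - ∫⁻ x in t, h x ∂(π i)) := mul_tsub_le _ _ _
        _ ≤ w i * ∫⁻ x in t, (Z i - h x) ∂(π i) := by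
            refine mul_le_mul_right ?_ (w i)
            rw [← setLIntegral_const t (Z i)]
            exact lintegral_sub_le _ _ hhm
    calc (μ s - ν0 s) + (ν0 sᶜ - μ sᶜ)
        ≤ (∑ i, w i * ∫⁻ x in s, (h x - Z i) ∂(π i))
          + ∑ i, w i * ∫⁻ x in sᶜ, (Z i - h x) ∂(π i) :=
          add_le_add (key s hs) (key' sᶜ hs.compl)
      _ = ∑ i, (w i * ∫⁻ x in s, (h x - Z i) ∂(π i)
          + w i * ∫⁻ x in sᶜ, (Z i - h x) ∂(π i)) := Finset.sum_add_distrib.symm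
      _ ≤ ∑ i, w i * D i := by
          refine Finset.sum_le_sum fun i _ => ?_
          rw [← mul_add]
          refine mul_le_mul_right ?_ (w i)
          calc (∫⁻ x in s, (h x - Z i) ∂(π i)) + ∫⁻ x in sᶜ, (Z i - h x) ∂(π i)
              ≤ (∫⁻ x in s, ((h x - Z i) + (Z i - h x)) ∂(π i))
                + ∫⁻ x in sᶜ, ((h x - Z i) + (Z i - h x)) ∂(π i) :=
                add_le_add (lintegral_mono fun x => le_self_add)
                  (lintegral_mono fun x => le_add_self)
            _ = D i := lintegral_add_compl _ hs
  -- Cauchy-Schwarz over the sum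
  have hsum : ∑ i, w i * D i ≤ (4 * ∑ i, w i * V i) ^ (1/2:ℝ) := by
    have hstep : ∀ i, w i * D i
        ≤ ((w i * Z i) ^ (1/2:ℝ)) * ((4 * (w i * V i)) ^ (1/2:ℝ)) := by
      intro i
      calc w i * D i ≤ w i * (4 * (Z i * V i)) ^ (1/2:ℝ) := mul_le_mul_right (hDle i) _
        _ = ((w i * Z i) ^ (1/2:ℝ)) * ((4 * (w i * V i)) ^ (1/2:ℝ)) := by
            conv_lhs => rw [← hsq_rpow (w i)]
            rw [← ENNReal.mul_rpow_of_nonneg _ _ (by norm_num : (0:ℝ) ≤ 1/2),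
              ← ENNReal.mul_rpow_of_nonneg _ _ (by norm_num : (0:ℝ) ≤ 1/2)]
            congr 1
            ring
    calc ∑ i, w i * D i
        ≤ ∑ i, ((w i * Z i) ^ (1/2:ℝ)) * ((4 * (w i * V i)) ^ (1/2:ℝ)) :=
          Finset.sum_le_sum fun i _ => hstep i
      _ ≤ (∑ i, (((w i * Z i) ^ (1/2:ℝ)) ^ 2)) ^ (1/2:ℝ)
          * (∑ i, (((4 * (w i * V i)) ^ (1/2:ℝ)) ^ 2)) ^ (1/2:ℝ) := ennreal_cs_fin _ _
      _ = (∑ i, w i * Z i) ^ (1/2:ℝ) * (∑ i, 4 * (w i * V i)) ^ (1/2:ℝ) := by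
          simp only [hrpow_sq]
      _ = (4 * ∑ i, w i * V i) ^ (1/2:ℝ) := by
          rw [hZsum, ENNReal.one_rpow, one_mul, ← Finset.mul_sum]
  have htv2 : tvDist μ ν0 ^ 2 ≤ 4 * ∑ i, w i * V i := by
    calc tvDist μ ν0 ^ 2 ≤ ((4 * ∑ i, w i * V i) ^ (1/2:ℝ)) ^ 2 := by
          have hle := le_trans htv hsum
          rw [sq, sq]
          exact mul_le_mul' hle hle
      _ = 4 * ∑ i, w i * V i := hrpow_sq _
  have hfinal : 4 * ∑ i, w i * V i ≤ 4 * C * E f := by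
    calc 4 * ∑ i, w i * V i ≤ 4 * ∑ i, w i * (C * Ei i f) :=
          mul_le_mul_right (Finset.sum_le_sum fun i _ => mul_le_mul_right (hVle i) _) 4
      _ = 4 * C * ∑ i, w i * Ei i f := by
          rw [mul_assoc]
          congr 1
          rw [Finset.mul_sum]
          exact Finset.sum_congr rfl fun i _ => by ring
      _ ≤ 4 * C * E f := mul_le_mul_right (hcomp f hfDom) _
  calc (⨅ ν ∈ mixSet π, tvDist μ ν ^ 2) ≤ tvDist μ ν0 ^ 2 := iInf₂_le ν0 hν0mem
    _ ≤ 4 * ∑ i, w i * V i := htv2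
    _ ≤ 4 * C * E f := hfinal
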